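/- There exists an instance on a path with 5 goods and 3 agents with binary additive valuations and an ordering σ such that the unique connected, σ-consistent, complete, Pareto optimal allocation violates EQ1; hence connected EQ1 + Pareto optimal allocations consistent with a given ordering need not exist. -/

import Mathlib

open Finset

/-- A set of goods on a path (goods indexed by `Fin m`) is connected iff it is an interval. -/
def IsIvl {m : ℕ} (S : Finset (Fin m)) : Prop :=
  ∀ ⦃a b c : Fin m⦄, a ∈ S → c ∈ S → a ≤ b → b ≤ c → b ∈ S

/-- A connected allocation on a path: each agent gets an interval, intervals pairwise disjoint. -/
structure Alloc (n m : ℕ) where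
  bundle : Fin n → Finset (Fin m)
  connected : ∀ i, IsIvl (bundle i)
  disj : ∀ i k, i ≠ k → Disjoint (bundle i) (bundle k)

/-- Complete: every good is assigned. -/
def Alloc.Complete {n m : ℕ} (A : Alloc n m) : Prop :=
  ∀ v : Fin m, ∃ i, v ∈ A.bundle i

/-- Additive utility from per-good values. -/
def util {n m : ℕ} (val : Fin n → Fin m → ℕ) (i : Fin n) (S : Finset (Fin m)) : ℕ :=
  ∑ j ∈ S, val i j

/-- Non-wasteful: every good is assigned to an agent who values it at 1. -/
def NonWasteful {n m : ℕ} (val : Fin n → Fin m → ℕ) (A : Alloc n m) : Prop :=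
  ∀ v : Fin m, ∃ i, v ∈ A.bundle i ∧ val i v = 1

/-- Pareto optimal among connected allocations. -/
def ParetoOptimal {n m : ℕ} (val : Fin n → Fin m → ℕ) (A : Alloc n m) : Prop :=
  ¬ ∃ B : Alloc n m,
      (∀ i, util val i (A.bundle i) ≤ util val i (B.bundle i)) ∧
      (∃ i, util val i (A.bundle i) < util val i (B.bundle i))

/-- Equitability up to one good, for general (set-function) utilities. -/
def EQ1 {n m : ℕ} (u : Fin n → Finset (Fin m) → ℕ) (A : Alloc n m) : Prop :=
  ∀ i k, (A.bundle k).Nonempty →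
    ∃ v ∈ A.bundle k, u k (A.bundle k \ {v}) ≤ u i (A.bundle i)

/-- σ-consistency: bundles appear left to right along the path in the order σ. -/
def Consistent {n m : ℕ} (σ : Equiv.Perm (Fin n)) (A : Alloc n m) : Prop :=
  ∀ i k : Fin n, i < k → ∀ x ∈ A.bundle (σ i), ∀ y ∈ A.bundle (σ k), x < y

def val14 : Fin 3 → Fin 5 → ℕ := ![![1,0,0,0,0], ![0,1,0,0,0], ![0,0,1,1,1]]

/-- The witness allocation ({0},{1},{2,3,4}). -/
def A14 : Alloc 3 5 where
  bundle := ![{0}, {1}, {2,3,4}]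
  connected := by unfold IsIvl; decide
  disj := by decide

lemma bound0 : ∀ S : Finset (Fin 5), util val14 0 S ≤ 1 := by decide
lemma bound1 : ∀ S : Finset (Fin 5), util val14 1 S ≤ 1 := by decide
lemma bound2 : ∀ S : Finset (Fin 5), util val14 2 S ≤ 3 := by decide

lemma boundI : ∀ i : Fin 3, ∀ S : Finset (Fin 5), util val14 i S ≤ util val14 i (A14.bundle i) := by
  intro i
  fin_cases i
  · exact fun S => le_trans (bound0 S) (by decide)
  · exact fun S => le_trans (bound1 S) (by decide)
  · exact fun S => le_trans (bound2 S) (by decide)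

lemma mem0 : ∀ S : Finset (Fin 5), util val14 0 S = 1 → (0 : Fin 5) ∈ S := by decide
lemma mem1 : ∀ S : Finset (Fin 5), util val14 1 S = 1 → (1 : Fin 5) ∈ S := by decide
lemma mem2 : ∀ S : Finset (Fin 5), util val14 2 S = 3 →
    (2 : Fin 5) ∈ S ∧ (3 : Fin 5) ∈ S ∧ (4 : Fin 5) ∈ S := by decide

lemma Alloc.ext' {n m : ℕ} {A B : Alloc n m} (h : A.bundle = B.bundle) : A = B := by
  cases A; cases B; simp only at h; subst h; rfl

lemma A14_po : ParetoOptimal val14 A14 := by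
  rintro ⟨B, _, i, hlt⟩
  exact absurd (boundI i (B.bundle i)) (not_le.mpr hlt)

lemma A14_unique (B : Alloc 3 5)
    (hc : Consistent (Equiv.refl (Fin 3)) B)
    (hpo : ParetoOptimal val14 B) : B = A14 := by
  -- B's utility profile must be maximal, else A14 Pareto-dominates B
  have hprof : ∀ i, util val14 i (B.bundle i) = util val14 i (A14.bundle i) := by
    intro i
    refine le_antisymm (boundI i _) ?_
    by_contra h
    push_neg at h
    exact hpo ⟨A14, fun j => boundI j _, i, h⟩
  have hu0 : util val14 0 (B.bundle 0) = 1 := by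
    have := hprof 0; rw [this]; decide
  have hu1 : util val14 1 (B.bundle 1) = 1 := by
    have := hprof 1; rw [this]; decide
  have hu2 : util val14 2 (B.bundle 2) = 3 := by
    have := hprof 2; rw [this]; decide
  have h0 : (0 : Fin 5) ∈ B.bundle 0 := mem0 _ hu0
  have h1 : (1 : Fin 5) ∈ B.bundle 1 := mem1 _ hu1
  obtain ⟨h2, h3, h4⟩ := mem2 _ hu2
  -- consistency forces the bundles to be exactly A14's
  have hc01 : ∀ x ∈ B.bundle 0, ∀ y ∈ B.bundle 1, x < y := by
    intro x hx y hy; exact hc 0 1 (by decide) x hx y hy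
  have hc12 : ∀ x ∈ B.bundle 1, ∀ y ∈ B.bundle 2, x < y := by
    intro x hx y hy; exact hc 1 2 (by decide) x hx y hy
  have hB0 : B.bundle 0 = {0} := by
    ext v
    simp only [Finset.mem_singleton]
    constructor
    · intro hv
      have h := hc01 v hv 1 h1
      fin_cases v
      · rfl
      all_goals exact absurd h (by decide)
    · rintro rfl; exact h0
  have hB1 : B.bundle 1 = {1} := by
    ext v
    simp only [Finset.mem_singleton]
    constructor
    · intro hv
      have ha := hc12 v hv 2 h2
      have hb := hc01 0 h0 v hv
      fin_cases v
      · exact absurd hb (by decide)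
      · rfl
      all_goals exact absurd ha (by decide)
    · rintro rfl; exact h1
  have hB2 : B.bundle 2 = {2, 3, 4} := by
    ext v
    constructor
    · intro hv
      have h := hc12 1 h1 v hv
      fin_cases v
      · exact absurd h (by decide)
      · exact absurd h (by decide)
      · exact Finset.mem_insert_self _ _
      · decide
      · decide
    · intro hv
      simp only [Finset.mem_insert, Finset.mem_singleton] at hv
      rcases hv with rfl | rfl | rfl
      · exact h2
      · exact h3
      · exact h4
  apply Alloc.ext'
  funext i
  fin_cases i
  · exact hB0
  · exact hB1
  · exact hB2

lemma A14_not_eq1 : ¬ EQ1 (util val14) A14 := by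
  intro h
  obtain ⟨v, hv, hle⟩ := h 0 2 (by decide)
  revert hle
  revert hv
  revert v
  decide

theorem stmt14 :
    (∃ A : Alloc 3 5,
      (Consistent (Equiv.refl (Fin 3)) A ∧ A.Complete ∧ ParetoOptimal val14 A) ∧
      (∀ B : Alloc 3 5,
        Consistent (Equiv.refl (Fin 3)) B ∧ B.Complete ∧ ParetoOptimal val14 B → B = A) ∧
      ¬ EQ1 (util val14) A) ∧
    ¬ ∃ A : Alloc 3 5,
        Consistent (Equiv.refl (Fin 3)) A ∧ A.Complete ∧ ParetoOptimal val14 A ∧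
          EQ1 (util val14) A := by
  have hcons : Consistent (Equiv.refl (Fin 3)) A14 := by
    intro i k hik x hx y hy
    simp only [Equiv.refl_apply] at hx hy
    revert hik hx hy
    revert i k x y
    decide
  have hcomp : A14.Complete := by
    intro v
    fin_cases v
    · exact ⟨0, by decide⟩
    · exact ⟨1, by decide⟩
    · exact ⟨2, by decide⟩
    · exact ⟨2, by decide⟩
    · exact ⟨2, by decide⟩
  refine ⟨⟨A14, ⟨hcons, hcomp, A14_po⟩,
      fun B ⟨hBc, _, hBpo⟩ => A14_unique B hBc hBpo, A14_not_eq1⟩, ?_⟩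
  rintro ⟨B, hBc, hBcomp, hBpo, hBeq1⟩
  rw [A14_unique B hBc hBpo] at hBeq1
  exact A14_not_eq1 hBeq1
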